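/- Let x: [0,∞) → (0,∞) be the solution of x'(t) = f(x(t)), x(0) = x₀, where f(x) = −x²/(rx + η) with r ≥ 0, η > 0. Let (a_i)_{i≥0} be a sequence satisfying a_0 ≤ x₀ and a_i ≤ a_{i−1} + f(a_{i−1}) with all a_i ∈ (0, x₀]. Then a_i ≤ x(i) for every nonnegative integer i. -/

import Mathlib

noncomputable def Gfun (r η : ℝ) (y : ℝ) : ℝ := r * Real.log y - η / y

lemma Gfun_mono (r η : ℝ) (hr : 0 ≤ r) (hη : 0 < η) {y z : ℝ}
    (hy : 0 < y) (hz : 0 < z) (h : y ≤ z) : Gfun r η y ≤ Gfun r η z := by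
  unfold Gfun
  have h1 : Real.log y ≤ Real.log z := Real.log_le_log hy h
  have h2 : η / z ≤ η / y := div_le_div_of_nonneg_left hη.le hy h
  nlinarith

lemma Gfun_strict (r η : ℝ) (hr : 0 ≤ r) (hη : 0 < η) {y z : ℝ}
    (hy : 0 < y) (hz : 0 < z) (h : Gfun r η y ≤ Gfun r η z) : y ≤ z := by
  by_contra hlt
  push_neg at hlt
  have h1 : Real.log z ≤ Real.log y := Real.log_le_log hz hlt.le
  have h2 : η / y < η / z := div_lt_div_of_pos_left hη hz hlt
  unfold Gfun at h
  nlinarith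

lemma Gfun_key (r η : ℝ) (hr : 0 ≤ r) (hη : 0 < η) {y z : ℝ}
    (hy : 0 < y) (hz : 0 < z) (h : z - y ≤ -y ^ 2 / (r * y + η)) :
    Gfun r η z ≤ Gfun r η y - 1 := by
  have hden : 0 < r * y + η := by positivity
  have hzy : z ≤ y := by
    rw [neg_div] at h
    have := div_pos (show (0:ℝ) < y ^ 2 by positivity) hden
    linarith
  have hlog : Real.log z - Real.log y ≤ (z - y) / y := by
    rw [← Real.log_div hz.ne' hy.ne']
    have := Real.log_le_sub_one_of_pos (show 0 < z / y by positivity)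
    have : Real.log (z / y) ≤ z / y - 1 := this
    calc Real.log (z / y) ≤ z / y - 1 := this
      _ = (z - y) / y := by field_simp
  have hinv : η / y - η / z ≤ η * (z - y) / y ^ 2 := by
    rw [div_sub_div _ _ hy.ne' hz.ne']
    rw [div_le_div_iff₀ (by positivity) (by positivity)]
    nlinarith [mul_nonneg (mul_nonneg hη.le (sub_nonneg.mpr hzy)) (mul_nonneg hy.le (sub_nonneg.mpr hzy))]
  have hsum : Gfun r η z - Gfun r η y ≤ (z - y) * ((r * y + η) / y ^ 2) := by
    unfold Gfun
    have h1 : r * (Real.log z - Real.log y) ≤ r * ((z - y) / y) :=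
      mul_le_mul_of_nonneg_left hlog hr
    have : (z - y) * ((r * y + η) / y ^ 2) = r * ((z - y) / y) + η * (z - y) / y ^ 2 := by
      field_simp
    nlinarith
  have hstep : (z - y) * ((r * y + η) / y ^ 2) ≤ -1 := by
    have hfrac : 0 < (r * y + η) / y ^ 2 := by positivity
    have := mul_le_mul_of_nonneg_right h hfrac.le
    calc (z - y) * ((r * y + η) / y ^ 2) ≤ (-y ^ 2 / (r * y + η)) * ((r * y + η) / y ^ 2) := this
      _ = -1 := by field_simp
  linarith

theorem discrete_continuous_comparison
    (r : ℕ) (η x₀ : ℝ) (hη : 0 < η) (hx₀ : 0 < x₀)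
    (x : ℝ → ℝ)
    (hx0 : x 0 = x₀)
    (hxpos : ∀ t, 0 ≤ t → 0 < x t)
    (hode : ∀ t, 0 ≤ t → HasDerivAt x (-(x t) ^ 2 / (r * x t + η)) t)
    (a : ℕ → ℝ)
    (ha0 : a 0 ≤ x₀)
    (harec : ∀ i, a (i + 1) ≤ a i + (-(a i) ^ 2 / (r * a i + η)))
    (hapos : ∀ i, 0 < a i) (haub : ∀ i, a i ≤ x₀) :
    ∀ i : ℕ, a i ≤ x i := by
  have hr : (0:ℝ) ≤ (r:ℝ) := Nat.cast_nonneg r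
  -- derivative of G ∘ x is -1 on [0,∞)
  have hGderiv : ∀ t, 0 ≤ t →
      HasDerivAt (fun s => Gfun r η (x s) + s) 0 t := by
    intro t ht
    have hxt : 0 < x t := hxpos t ht
    have hden : 0 < (r:ℝ) * x t + η := by positivity
    have hlog : HasDerivAt (fun y : ℝ => (r:ℝ) * Real.log y)
        ((r:ℝ) * (x t)⁻¹) (x t) := (Real.hasDerivAt_log hxt.ne').const_mul _
    have hinv : HasDerivAt (fun y : ℝ => η / y)
        (η * (-(x t ^ 2)⁻¹)) (x t) := by
      simpa [div_eq_mul_inv] using (hasDerivAt_inv hxt.ne').const_mul η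
    have hG : HasDerivAt (fun y : ℝ => Gfun r η y)
        ((r:ℝ) * (x t)⁻¹ - η * (-(x t ^ 2)⁻¹)) (x t) := hlog.sub hinv
    have hcomp := hG.comp t (hode t ht)
    have hval : ((r:ℝ) * (x t)⁻¹ - η * (-(x t ^ 2)⁻¹)) * (-(x t) ^ 2 / (r * x t + η)) = -1 := by
      field_simp
      ring
    have := (hcomp.congr_deriv hval).add (hasDerivAt_id t)
    simp at this; exact this
  -- G(x t) = G(x 0) - t for t ≥ 0
  have hGconst : ∀ t : ℝ, 0 ≤ t → Gfun (r:ℝ) η (x t) = Gfun (r:ℝ) η x₀ - t := by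
    intro t ht
    have hcont : ContinuousOn (fun s => Gfun r η (x s) + s) (Set.Icc 0 t) := by
      intro s hs
      exact ((hGderiv s hs.1).continuousAt).continuousWithinAt
    have hderiv : ∀ s ∈ Set.Ico (0:ℝ) t,
        HasDerivWithinAt (fun s => Gfun r η (x s) + s) 0 (Set.Ici s) s := by
      intro s hs
      exact (hGderiv s hs.1).hasDerivWithinAt
    have := constant_of_has_deriv_right_zero hcont hderiv t (Set.right_mem_Icc.mpr ht)
    simp only [add_zero] at this
    rw [hx0] at this
    linarith
  intro i
  induction i with
  | zero => simpa [hx0] using ha0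
  | succ n ih =>
    have hxn : 0 < x n := hxpos n (by positivity)
    have hxn1 : 0 < x (n+1) := hxpos (n+1) (by positivity)
    rw [show ((n+1:ℕ):ℝ) = (n:ℝ)+1 from by push_cast; ring]
    apply Gfun_strict (r:ℝ) η hr hη (hapos (n+1)) hxn1
    have e1 : Gfun (r:ℝ) η (x ((n:ℝ)+1)) = Gfun (r:ℝ) η (x (n:ℝ)) - 1 := by
      rw [hGconst ((n:ℝ)+1) (by positivity), hGconst (n:ℝ) (Nat.cast_nonneg n)]
      ring
    have hkey : Gfun (r:ℝ) η (a (n+1)) ≤ Gfun (r:ℝ) η (a n) - 1 :=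
      Gfun_key (r:ℝ) η hr hη (hapos n) (hapos (n+1)) (by linarith [harec n])
    have hmono : Gfun (r:ℝ) η (a n) ≤ Gfun (r:ℝ) η (x n) :=
      Gfun_mono (r:ℝ) η hr hη (hapos n) hxn ih
    linarith
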